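/- Validity-preserving weakening (relational atoms on the right): if the sequent Γ ⊢ Δ, x→a z is valid and x→a z ∉ Γ, then Γ ⊢ Δ is valid. -/

import Mathlib

set_option maxHeartbeats 1000000

/-! ### Syntax of PDL -/

mutual
inductive PDLFormula : Type
  | bot : PDLFormula
  | atom : ℕ → PDLFormula
  | and : PDLFormula → PDLFormula → PDLFormula
  | or : PDLFormula → PDLFormula → PDLFormula
  | imp : PDLFormula → PDLFormula → PDLFormula
  | box : PDLProgram → PDLFormula → PDLFormula
  deriving DecidableEq

inductive PDLProgram : Type
  | atom : ℕ → PDLProgram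
  | comp : PDLProgram → PDLProgram → PDLProgram
  | choice : PDLProgram → PDLProgram → PDLProgram
  | test : PDLFormula → PDLProgram
  | star : PDLProgram → PDLProgram
  deriving DecidableEq
end

/-! ### Semantics of PDL -/

structure PDLModel where
  State : Type
  propI : ℕ → Set State
  progI : ℕ → Set (State × State)

mutual
def PDLFormula.sem (m : PDLModel) : PDLFormula → Set m.State
  | .bot => ∅
  | .atom p => m.propI p
  | .and φ ψ => PDLFormula.sem m φ ∩ PDLFormula.sem m ψ
  | .or φ ψ => PDLFormula.sem m φ ∪ PDLFormula.sem m ψ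
  | .imp φ ψ => (PDLFormula.sem m φ)ᶜ ∪ PDLFormula.sem m ψ
  | .box α φ => { s | ∀ t, (s, t) ∈ PDLProgram.sem m α → t ∈ PDLFormula.sem m φ }

def PDLProgram.sem (m : PDLModel) : PDLProgram → Set (m.State × m.State)
  | .atom a => m.progI a
  | .comp α β => { p | ∃ t, (p.1, t) ∈ PDLProgram.sem m α ∧ (t, p.2) ∈ PDLProgram.sem m β }
  | .choice α β => PDLProgram.sem m α ∪ PDLProgram.sem m β
  | .test φ => { p | p.1 = p.2 ∧ p.1 ∈ PDLFormula.sem m φ }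
  | .star α => { p | Relation.ReflTransGen (fun s t => (s, t) ∈ PDLProgram.sem m α) p.1 p.2 }
end

/-! ### Labelled sequents -/

abbrev Label := ℕ

inductive SeqElem : Type
  | rel : Label → ℕ → Label → SeqElem
  | lab : Label → PDLFormula → SeqElem
  deriving DecidableEq

structure Sequent where
  ant : Finset SeqElem
  suc : Finset SeqElem

def SeqElem.sat (m : PDLModel) (v : Label → m.State) : SeqElem → Prop
  | .rel x a y => (v x, v y) ∈ m.progI a
  | .lab x φ => v x ∈ PDLFormula.sem m φ

def Sequent.valid (S : Sequent) : Prop :=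
  ∀ (m : PDLModel) (v : Label → m.State),
    (∀ A ∈ S.ant, A.sat m v) → ∃ B ∈ S.suc, B.sat m v

def Sequent.falsifiedBy (S : Sequent) (m : PDLModel) (v : Label → m.State) : Prop :=
  (∀ A ∈ S.ant, A.sat m v) ∧ ∀ B ∈ S.suc, ¬ B.sat m v

/-! ### Labels, starred labels, reachability -/

def SeqElem.labels : SeqElem → Finset Label
  | .rel x _ y => {x, y}
  | .lab x _ => {x}

def labs (Γ : Finset SeqElem) : Finset Label := Γ.biUnion SeqElem.labels

def starred (Δ : Finset SeqElem) : Set Label :=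
  { x | ∃ α φ, SeqElem.lab x (PDLFormula.box (PDLProgram.star α) φ) ∈ Δ }

def relStep (Γ : Finset SeqElem) (x y : Label) : Prop := ∃ a, SeqElem.rel x a y ∈ Γ

/-- `x` reaches `y` through a (possibly empty) chain of relational atoms of `Γ`. -/
def reaches (Γ : Finset SeqElem) : Label → Label → Prop := Relation.ReflTransGen (relStep Γ)

/-- A set of relational atoms is acyclic when no label reaches itself via a nonempty chain. -/
def RelAcyclic (Γ : Finset SeqElem) : Prop := ∀ x, ¬ Relation.TransGen (relStep Γ) x x

def Sequent.Acyclic (S : Sequent) : Prop := RelAcyclic S.ant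

/-! ### Classification of formulas, normal sequents -/

def PDLFormula.isAtomic : PDLFormula → Prop
  | .bot => True
  | .atom _ => True
  | _ => False

def PDLFormula.isIterated : PDLFormula → Prop
  | .box (.star _) _ => True
  | _ => False

def SeqElem.isRel : SeqElem → Prop
  | .rel _ _ _ => True
  | _ => False

def NormalSeq (S : Sequent) : Prop :=
  (∀ A ∈ S.ant, A ∉ S.suc) ∧
  (∀ A ∈ S.suc, ∃ x φ, A = SeqElem.lab x φ ∧ (φ.isAtomic ∨ φ.isIterated)) ∧
  (∀ A ∈ S.ant, A.isRel ∨ ∃ x φ, A = SeqElem.lab x φ ∧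
      (φ.isAtomic ∨ ∃ a ψ, φ = PDLFormula.box (PDLProgram.atom a) ψ ∧
        ∀ y, SeqElem.rel x a y ∉ S.ant))

/-! ### Test-freeness and subformulas -/

mutual
def PDLFormula.TestFree : PDLFormula → Prop
  | .bot => True
  | .atom _ => True
  | .and φ ψ => PDLFormula.TestFree φ ∧ PDLFormula.TestFree ψ
  | .or φ ψ => PDLFormula.TestFree φ ∧ PDLFormula.TestFree ψ
  | .imp φ ψ => PDLFormula.TestFree φ ∧ PDLFormula.TestFree ψ
  | .box α φ => PDLProgram.TestFree α ∧ PDLFormula.TestFree φ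

def PDLProgram.TestFree : PDLProgram → Prop
  | .atom _ => True
  | .comp α β => PDLProgram.TestFree α ∧ PDLProgram.TestFree β
  | .choice α β => PDLProgram.TestFree α ∧ PDLProgram.TestFree β
  | .test _ => False
  | .star α => PDLProgram.TestFree α
end

def SeqElem.TestFree : SeqElem → Prop
  | .rel _ _ _ => True
  | .lab _ φ => φ.TestFree

def Sequent.TestFree (S : Sequent) : Prop :=
  (∀ A ∈ S.ant, A.TestFree) ∧ (∀ A ∈ S.suc, A.TestFree)

mutual
inductive Subf : PDLFormula → PDLFormula → Prop
  | refl (φ) : Subf φ φ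
  | andl {χ φ ψ} : Subf χ φ → Subf χ (PDLFormula.and φ ψ)
  | andr {χ φ ψ} : Subf χ ψ → Subf χ (PDLFormula.and φ ψ)
  | orl {χ φ ψ} : Subf χ φ → Subf χ (PDLFormula.or φ ψ)
  | orr {χ φ ψ} : Subf χ ψ → Subf χ (PDLFormula.or φ ψ)
  | impl {χ φ ψ} : Subf χ φ → Subf χ (PDLFormula.imp φ ψ)
  | impr {χ φ ψ} : Subf χ ψ → Subf χ (PDLFormula.imp φ ψ)
  | boxf {χ α φ} : Subf χ φ → Subf χ (PDLFormula.box α φ)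
  | boxp {χ α φ} : SubfP χ α → Subf χ (PDLFormula.box α φ)

inductive SubfP : PDLFormula → PDLProgram → Prop
  | compl {χ α β} : SubfP χ α → SubfP χ (PDLProgram.comp α β)
  | compr {χ α β} : SubfP χ β → SubfP χ (PDLProgram.comp α β)
  | choicel {χ α β} : SubfP χ α → SubfP χ (PDLProgram.choice α β)
  | choicer {χ α β} : SubfP χ β → SubfP χ (PDLProgram.choice α β)
  | test {χ φ} : Subf χ φ → SubfP χ (PDLProgram.test φ)
  | star {χ α} : SubfP χ α → SubfP χ (PDLProgram.star α)
end

/-! ### Label substitution -/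

def substLabel (x y z : Label) : Label := if z = x then y else z

def SeqElem.subst (x y : Label) : SeqElem → SeqElem
  | .rel z a w => .rel (substLabel x y z) a (substLabel x y w)
  | .lab z φ => .lab (substLabel x y z) φ


/-! ### Auxiliary: bisimulation model for weakening -/

def WeakM (m : PDLModel) (v : Label → m.State) (x z : Label) (a : ℕ) : PDLModel where
  State := m.State × Label
  propI p := {s | s.1 ∈ m.propI p}
  progI b := {p | (p.1.1, p.2.1) ∈ m.progI b ∧
      ¬(b = a ∧ p.1 = (v x, x) ∧ p.2 = (v z, z))}

mutual
theorem weak_formSem (m : PDLModel) (v : Label → m.State) (x z : Label) (a : ℕ) :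
    ∀ (φ : PDLFormula) (s : m.State × Label),
      s ∈ PDLFormula.sem (WeakM m v x z a) φ ↔ s.1 ∈ PDLFormula.sem m φ
  | .bot, s => by simp [PDLFormula.sem]; exact fun h => h
  | .atom p, s => by simp [PDLFormula.sem, WeakM]; exact Iff.rfl
  | .and φ ψ, s => by
      simp only [PDLFormula.sem, Set.mem_inter_iff,
        weak_formSem m v x z a φ s, weak_formSem m v x z a ψ s]
      exact and_congr (weak_formSem m v x z a φ s) (weak_formSem m v x z a ψ s)
  | .or φ ψ, s => by
      simp only [PDLFormula.sem, Set.mem_union,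
        weak_formSem m v x z a φ s, weak_formSem m v x z a ψ s]
      exact or_congr (weak_formSem m v x z a φ s) (weak_formSem m v x z a ψ s)
  | .imp φ ψ, s => by
      simp only [PDLFormula.sem, Set.mem_union, Set.mem_compl_iff,
        weak_formSem m v x z a φ s, weak_formSem m v x z a ψ s]
      exact or_congr (not_congr (weak_formSem m v x z a φ s)) (weak_formSem m v x z a ψ s)
  | .box α φ, s => by
      constructor
      · intro h t ht
        obtain ⟨j, hj⟩ := weak_progForth m v x z a α s.1 t s.2 ht
        have := h (t, j) hj
        exact (weak_formSem m v x z a φ (t, j)).mp this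
      · intro h t ht
        have hb := weak_progBack m v x z a α (s, t) ht
        exact (weak_formSem m v x z a φ t).mpr (h t.1 hb)

theorem weak_progBack (m : PDLModel) (v : Label → m.State) (x z : Label) (a : ℕ) :
    ∀ (α : PDLProgram) (p : ((WeakM m v x z a).State × (WeakM m v x z a).State)),
      p ∈ PDLProgram.sem (WeakM m v x z a) α → (p.1.1, p.2.1) ∈ PDLProgram.sem m α
  | .atom b, p => fun h => h.1
  | .comp α β, p => by
      rintro ⟨u, hu1, hu2⟩
      exact ⟨u.1, weak_progBack m v x z a α (p.1, u) hu1,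
        weak_progBack m v x z a β (u, p.2) hu2⟩
  | .choice α β, p => by
      rintro (h | h)
      · exact Or.inl (weak_progBack m v x z a α p h)
      · exact Or.inr (weak_progBack m v x z a β p h)
  | .test φ, p => by
      rintro ⟨heq, hmem⟩
      exact ⟨by rw [heq], (weak_formSem m v x z a φ p.1).mp hmem⟩
  | .star α, p => by
      intro h
      exact Relation.ReflTransGen.lift (p := fun s t => (s, t) ∈ PDLProgram.sem m α) Prod.fst
        (fun q r hqr => weak_progBack m v x z a α (q, r) hqr) _ _ h

theorem weak_progForth (m : PDLModel) (v : Label → m.State) (x z : Label) (a : ℕ) :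
    ∀ (α : PDLProgram) (s t : m.State) (i : Label),
      (s, t) ∈ PDLProgram.sem m α →
      ∃ j, ((s, i), (t, j)) ∈ PDLProgram.sem (WeakM m v x z a) α
  | .atom b, s, t, i => by
      intro h
      refine ⟨z + 1, h, ?_⟩
      rintro ⟨-, -, h2⟩
      exact Nat.succ_ne_self z (congrArg Prod.snd h2 : z + 1 = z)
  | .comp α β, s, t, i => by
      rintro ⟨u, hu1, hu2⟩
      obtain ⟨j, hj⟩ := weak_progForth m v x z a α s u i hu1
      obtain ⟨k, hk⟩ := weak_progForth m v x z a β u t j hu2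
      exact ⟨k, (u, j), hj, hk⟩
  | .choice α β, s, t, i => by
      rintro (h | h)
      · obtain ⟨j, hj⟩ := weak_progForth m v x z a α s t i h
        exact ⟨j, Or.inl hj⟩
      · obtain ⟨j, hj⟩ := weak_progForth m v x z a β s t i h
        exact ⟨j, Or.inr hj⟩
  | .test φ, s, t, i => by
      rintro ⟨heq, hmem⟩
      exact ⟨i, Prod.ext (heq : s = t) rfl,
        (weak_formSem m v x z a φ (s, i)).mpr hmem⟩
  | .star α, s, t, i => by
      intro h
      have h' : Relation.ReflTransGen
          (fun u w => (u, w) ∈ PDLProgram.sem m α) s t := h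
      clear h
      induction h' with
      | refl => exact ⟨i, Relation.ReflTransGen.refl⟩
      | tail _ hstep ih =>
          obtain ⟨j, hj⟩ := ih
          obtain ⟨k, hk⟩ := weak_progForth m v x z a α _ _ j hstep
          exact ⟨k, hj.tail hk⟩
end

/-- **Validity-preserving weakening (relational atoms on the right)**: if the sequent
`Γ ⊢ Δ, x →a z` is valid and `x →a z ∉ Γ`, then `Γ ⊢ Δ` is valid. -/
theorem valid_weakening_rel_right (Γ Δ : Finset SeqElem) (x z : Label) (a : ℕ)
    (hvalid : Sequent.valid ⟨Γ, insert (SeqElem.rel x a z) Δ⟩)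
    (hnotin : SeqElem.rel x a z ∉ Γ) :
    Sequent.valid ⟨Γ, Δ⟩ := by
  intro m v hΓ
  set m' := WeakM m v x z a with hm'
  set v' : Label → m'.State := fun l => (v l, l) with hv'
  have hΓ' : ∀ A ∈ Γ, A.sat m' v' := by
    intro A hA
    cases A with
    | rel y b w =>
        refine ⟨hΓ _ hA, ?_⟩
        rintro ⟨rfl, h1, h2⟩
        have hy : y = x := congrArg Prod.snd h1
        have hw : w = z := congrArg Prod.snd h2
        subst hy; subst hw
        exact hnotin hA
    | lab y φ =>
        exact (weak_formSem m v x z a φ (v y, y)).mpr (hΓ _ hA)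
  obtain ⟨B, hB, hBsat⟩ := hvalid m' v' hΓ'
  rcases Finset.mem_insert.mp hB with rfl | hB
  · exact (hBsat.2 ⟨rfl, rfl, rfl⟩).elim
  · refine ⟨B, hB, ?_⟩
    cases B with
    | rel y b w => exact hBsat.1
    | lab y φ => exact (weak_formSem m v x z a φ (v y, y)).mp hBsat
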